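/- Assume k₂ = 4 − k₁ and that the multiset {k₁, k₂, k₃} is not equal to {−2, 0, 4}. Let w = (x⁻¹, 0, 0, 0, 0, (k₃/2)·x⁻²) (components in the order (a₁₂, a₁₃, a₂₃, b₁, b₂, b₃)). Then E(w) ∈ B, F(w) ∈ B, w ∉ B, and for every z ∈ V with E(z) ∈ B, F(z) ∈ B and z ∉ B there exists A ∈ G such that Int A(w) − z ∈ B. In other words, there exists a unique up to isomorphism 𝔰-even-homogeneous non-split supermanifold with retract (k₁, 4−k₁, k₃), corresponding to the class of w. -/

import Mathlib

noncomputable section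

open LaurentPolynomial

/-- `L = ℂ[x, x⁻¹]`, the Laurent polynomials over `ℂ`. -/
abbrev L : Type := LaurentPolynomial ℂ

/-- The coefficient of `x^n` in a Laurent polynomial. -/
def coeffL (p : L) (n : ℤ) : ℂ := (AddMonoidAlgebra.coeff p : ℤ →₀ ℂ) n

lemma coeffL_zero (n : ℤ) : coeffL 0 n = 0 := rfl

lemma coeffL_add (a b : L) (n : ℤ) : coeffL (a + b) n = coeffL a n + coeffL b n := by
  unfold coeffL; first | rfl | simp

lemma coeffL_smul (c : ℂ) (a : L) (n : ℤ) : coeffL (c • a) n = c * coeffL a n := by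
  unfold coeffL; first | rfl | simp

/-- `L₊`: Laurent polynomials involving only nonnegative powers of `x`. -/
def Lplus : Submodule ℂ L where
  carrier := {p | ∀ n : ℤ, n < 0 → coeffL p n = 0}
  zero_mem' := fun n _ => coeffL_zero n
  add_mem' := by intro a b ha hb n hn; rw [coeffL_add, ha n hn, hb n hn, add_zero]
  smul_mem' := by intro c p hp n hn; rw [coeffL_smul, hp n hn, mul_zero]

/-- `L₋`: Laurent polynomials involving only nonpositive powers of `x`. -/
def Lminus : Submodule ℂ L where
  carrier := {p | ∀ n : ℤ, 0 < n → coeffL p n = 0}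
  zero_mem' := fun n _ => coeffL_zero n
  add_mem' := by intro a b ha hb n hn; rw [coeffL_add, ha n hn, hb n hn, add_zero]
  smul_mem' := by intro c p hp n hn; rw [coeffL_smul, hp n hn, mul_zero]

/-- The derivative `d/dx` on Laurent polynomials. -/
def D (p : L) : L := Finsupp.sum (AddMonoidAlgebra.coeff p : ℤ →₀ ℂ) fun n a => ((n : ℂ) * a) • T (n - 1)

/-- `V = L⁶`, the model of Čech 1-cochains with values in `T₂`: a tuple
`v = (a₁₂, a₁₃, a₂₃, b₁, b₂, b₃)` (components `v 0, …, v 5`) encodes the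
vector field `Σ_{i<j} a_{ij}(x)ξᵢξⱼ∂/∂x + Σ_t b_t(x)ξ₁ξ₂ξ₃∂/∂ξ_t` on `U₀ ∩ U₁`. -/
abbrev V : Type := Fin 6 → L

/-- `B₀ = (L₊)⁶`: cochains holomorphic in `U₀`. -/
def B0 : Submodule ℂ V := Submodule.pi Set.univ fun _ => Lplus

/-- The linear map `v ↦ x^m · (v i)`. -/
def cndA (m : ℤ) (i : Fin 6) : V →ₗ[ℂ] L :=
  (LinearMap.mulLeft ℂ (T m)).comp (LinearMap.proj i)

/-- The linear map `v ↦ x^m · (v i − c·x⁻¹·(v j))`. -/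
def cndB (m : ℤ) (c : ℂ) (i j : Fin 6) : V →ₗ[ℂ] L :=
  (LinearMap.mulLeft ℂ (T m)).comp
    (LinearMap.proj i - c • (LinearMap.mulLeft ℂ (T (-1))).comp (LinearMap.proj j))

/-- `B₁`: cochains holomorphic in `U₁`, i.e. `v` with
`x^(kᵢ+kⱼ−2)·a_{ij} ∈ L₋` for all `i < j` and
`x^(d−k_t)·(b_t − σ_t·k_t·x⁻¹·a_{(t)}) ∈ L₋` for `t = 1, 2, 3`
(σ₁ = 1, σ₂ = −1, σ₃ = 1, a₍₁₎ = a₂₃, a₍₂₎ = a₁₃, a₍₃₎ = a₁₂, d = k₁+k₂+k₃). -/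
def B1 (k1 k2 k3 : ℤ) : Submodule ℂ V :=
  Lminus.comap (cndA (k1 + k2 - 2) 0) ⊓
  Lminus.comap (cndA (k1 + k3 - 2) 1) ⊓
  Lminus.comap (cndA (k2 + k3 - 2) 2) ⊓
  Lminus.comap (cndB (k2 + k3) ((k1 : ℂ)) 3 2) ⊓
  Lminus.comap (cndB (k1 + k3) (-(k2 : ℂ)) 4 1) ⊓
  Lminus.comap (cndB (k1 + k2) ((k3 : ℂ)) 5 0)

/-- The coboundary subspace `B = B₀ + B₁`. -/
def B (k1 k2 k3 : ℤ) : Submodule ℂ V := B0 ⊔ B1 k1 k2 k3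

/-- Action of `e = ∂/∂x` on cocycles: the componentwise derivative. -/
def Eop : V → V := fun v i => D (v i)

/-- Action of `f = ∂/∂y` on cocycles, with components
`a_{ij} ↦ (2 − kᵢ − kⱼ)·x·a_{ij} − x²·a_{ij}′` and
`b_t ↦ σ_t·k_t·a₍ₜ₎ − (d − k_t)·x·b_t − x²·b_t′`. -/
def Fop (k1 k2 k3 : ℤ) : V → V := fun v =>
  ![((2 - k1 - k2 : ℤ) : ℂ) • (T 1 * v 0) - T 2 * D (v 0),
    ((2 - k1 - k3 : ℤ) : ℂ) • (T 1 * v 1) - T 2 * D (v 1),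
    ((2 - k2 - k3 : ℤ) : ℂ) • (T 1 * v 2) - T 2 * D (v 2),
    (k1 : ℂ) • v 2 - ((k2 + k3 : ℤ) : ℂ) • (T 1 * v 3) - T 2 * D (v 3),
    -((k2 : ℂ) • v 1) - ((k1 + k3 : ℤ) : ℂ) • (T 1 * v 4) - T 2 * D (v 4),
    (k3 : ℂ) • v 0 - ((k1 + k2 : ℤ) : ℂ) • (T 1 * v 5) - T 2 * D (v 5)]

/-- `N(v) = (0, 0, a₁₃, −b₂, 0, 0)`; `e′ = ∂/∂x + ξ₂∂/∂ξ₁` acts by `E′ = E + N`. -/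
def Nop : V → V := fun v => ![0, 0, v 1, -v 4, 0, 0]

/-- `M(v) = (0, a₂₃, 0, 0, −b₁, 0)`; `f′ = ∂/∂y + η₁∂/∂η₂` acts by `F′ = F + M`. -/
def Mop : V → V := fun v => ![0, v 2, 0, 0, -v 3, 0]

/-- The action `E′ = E + N` of `e′ = ∂/∂x + ξ₂∂/∂ξ₁`. -/
def E'op : V → V := fun v => Eop v + Nop v

/-- The action `F′ = F + M` of `f′ = ∂/∂y + η₁∂/∂η₂`. -/
def F'op (k1 k2 k3 : ℤ) : V → V := fun v => Fop k1 k2 k3 v + Mop v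

/-- `N″(v) = (0, a₁₂, a₁₃, −b₂, −b₃, 0)`;
`e″ = ∂/∂x + ξ₂∂/∂ξ₁ + ξ₃∂/∂ξ₂` acts by `E″ = E + N″`. -/
def N''op : V → V := fun v => ![0, v 0, v 1, -v 4, -v 5, 0]

/-- `M″(v) = (2a₁₃, 2a₂₃, 0, 0, −2b₁, −2b₂)`;
`f″ = ∂/∂y + 2η₁∂/∂η₂ + 2η₂∂/∂η₃` acts by `F″ = F + M″`. -/
def M''op : V → V := fun v => ![(2 : ℂ) • v 1, (2 : ℂ) • v 2, 0, 0, -((2 : ℂ) • v 3), -((2 : ℂ) • v 4)]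

/-- The action `E″ = E + N″` of `e″`. -/
def E''op : V → V := fun v => Eop v + N''op v

/-- The action `F″ = F + M″` of `f″`. -/
def F''op (k1 k2 k3 : ℤ) : V → V := fun v => Fop k1 k2 k3 v + M''op v

/-- `f` is a polynomial in `x` of degree at most `m` (in particular `f = 0`
when `m < 0`). -/
def degOK (m : ℤ) (f : L) : Prop := ∀ n : ℤ, n < 0 ∨ m < n → coeffL f n = 0

/-- The group `G = Aut E` of invertible `3×3` matrices `A = (A_{pq}(x))` whose
entry `A_{pq}` is a polynomial in `x` of degree at most `k q − k p` (and `0`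
if `k q < k p`), and whose inverse has entries of the same form. -/
structure GElt (k : Fin 3 → ℤ) where
  A : Matrix (Fin 3) (Fin 3) L
  Ainv : Matrix (Fin 3) (Fin 3) L
  mul_inv : A * Ainv = 1
  inv_mul : Ainv * A = 1
  degA : ∀ p q, degOK (k q - k p) (A p q)
  degAinv : ∀ p q, degOK (k q - k p) (Ainv p q)

/-- The action `Int A` of `G` on `V`:
`â_{pq} = Σ_{i<j} (A_{pi}A_{qj} − A_{qi}A_{pj})·a_{ij}` for `p < q`, and
`b̂_u = det(A)·(Σ_t β_{tu}·b_t + Σ_{i<j} σ_{l(ij)}·(β_{l(ij),u})′·a_{ij})`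
where `β = A⁻¹` and `l(ij)` is the index complementary to `{i, j}`. -/
def IntAct {k : Fin 3 → ℤ} (g : GElt k) (v : V) : V :=
  let A := g.A
  let β := g.Ainv
  ![(A 0 0 * A 1 1 - A 1 0 * A 0 1) * v 0 + (A 0 0 * A 1 2 - A 1 0 * A 0 2) * v 1 +
      (A 0 1 * A 1 2 - A 1 1 * A 0 2) * v 2,
    (A 0 0 * A 2 1 - A 2 0 * A 0 1) * v 0 + (A 0 0 * A 2 2 - A 2 0 * A 0 2) * v 1 +
      (A 0 1 * A 2 2 - A 2 1 * A 0 2) * v 2,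
    (A 1 0 * A 2 1 - A 2 0 * A 1 1) * v 0 + (A 1 0 * A 2 2 - A 2 0 * A 1 2) * v 1 +
      (A 1 1 * A 2 2 - A 2 1 * A 1 2) * v 2,
    A.det * (β 0 0 * v 3 + β 1 0 * v 4 + β 2 0 * v 5 +
      D (β 2 0) * v 0 - D (β 1 0) * v 1 + D (β 0 0) * v 2),
    A.det * (β 0 1 * v 3 + β 1 1 * v 4 + β 2 1 * v 5 +
      D (β 2 1) * v 0 - D (β 1 1) * v 1 + D (β 0 1) * v 2),
    A.det * (β 0 2 * v 3 + β 1 2 * v 4 + β 2 2 * v 5 +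
      D (β 2 2) * v 0 - D (β 1 2) * v 1 + D (β 0 2) * v 2)]

-- coefficient infrastructure
lemma coeffL_sub (a b : L) (n : ℤ) : coeffL (a - b) n = coeffL a n - coeffL b n := by
  unfold coeffL; rfl

lemma coeffL_neg (a : L) (n : ℤ) : coeffL (-a) n = -coeffL a n := by
  unfold coeffL; rfl

lemma coeffL_single (m : ℤ) (c : ℂ) (n : ℤ) :
    coeffL (AddMonoidAlgebra.single m c : L) n = if n = m then c else 0 := by
  unfold coeffL
  rw [AddMonoidAlgebra.coeff_single, Finsupp.single_apply]
  simp [eq_comm]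

lemma T_eq_single (m : ℤ) : (T m : L) = AddMonoidAlgebra.single m 1 := rfl

lemma C_eq_single (c : ℂ) : (C c : L) = AddMonoidAlgebra.single 0 c := by
  simp [single_eq_C_mul_T]

lemma coeffL_T (m n : ℤ) : coeffL (T m) n = if n = m then 1 else 0 := by
  rw [T_eq_single, coeffL_single]

lemma coeffL_T_mul (m : ℤ) (p : L) (n : ℤ) : coeffL (T m * p) n = coeffL p (n - m) := by
  unfold coeffL
  rw [T_eq_single]
  rw [AddMonoidAlgebra.coeff_single_mul_apply]
  rw [one_mul]
  norm_num [sub_eq_neg_add]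

lemma coeffL_C_mul (c : ℂ) (p : L) (n : ℤ) : coeffL (C c * p) n = c * coeffL p n := by
  unfold coeffL
  rw [C_eq_single]
  rw [AddMonoidAlgebra.coeff_single_mul_apply]
  norm_num

lemma smul_eq_C_mul (c : ℂ) (p : L) : c • p = C c * p := by
  rw [C_eq_algebraMap, ← Algebra.smul_def]

lemma coeffL_smul_single (c : ℂ) (m : ℤ) : (c • T m : L) = AddMonoidAlgebra.single m c := by
  rw [T_eq_single]
  rw [AddMonoidAlgebra.smul_single']
  rw [mul_one]

lemma coeffL_D (p : L) (n : ℤ) : coeffL (D p) n = ((n : ℂ) + 1) * coeffL p (n + 1) := by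
  unfold D coeffL
  have h1 : ∀ k : ℤ, ∀ a : ℂ, (((k : ℂ) * a) • T (k-1) : L) = AddMonoidAlgebra.single (k-1) ((k:ℂ)*a) :=
    fun k a => coeffL_smul_single _ _
  simp_rw [h1]
  rw [AddMonoidAlgebra.coeff_finsuppSum, Finsupp.sum_apply]
  have h2 : ∀ k : ℤ, ∀ a : ℂ, (AddMonoidAlgebra.single (k-1) ((k:ℂ)*a) : L).coeff n
      = if k = n + 1 then ((k:ℂ)*a) else 0 := by
    intro k a
    rw [AddMonoidAlgebra.coeff_single, Finsupp.single_apply]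
    congr 1
    simp only [eq_iff_iff]
    omega
  simp_rw [h2]
  rw [Finsupp.sum_ite_eq' p.coeff (n+1) (fun k a => (k:ℂ)*a)]
  by_cases h : (n+1) ∈ p.coeff.support
  · simp [h]
  · rw [if_neg h]
    rw [Finsupp.notMem_support_iff.mp h]
    ring
/-- Pair-level characterization of membership in `B`. -/
def memBpair (m : ℤ) (κ : ℂ) (a b : L) : Prop :=
  (∀ n : ℤ, 2 - m < n → n < 0 → coeffL a n = 0) ∧
  (∀ n : ℤ, -m < n → n ≤ -2 → coeffL b n = κ * coeffL a (n + 1)) ∧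
  ((3 ≤ m ∨ (m = 2 ∧ κ = 0)) → coeffL b (-1) = 0)

lemma mem_Lplus_iff (p : L) : p ∈ Lplus ↔ ∀ n : ℤ, n < 0 → coeffL p n = 0 := Iff.rfl

lemma mem_Lminus_iff (p : L) : p ∈ Lminus ↔ ∀ n : ℤ, 0 < n → coeffL p n = 0 := Iff.rfl

/-- forward: pieces give the pair conditions -/
lemma pair_mem (m : ℤ) (κ : ℂ) (ua ub va vb : L)
    (hua : ∀ n : ℤ, n < 0 → coeffL ua n = 0) (hub : ∀ n : ℤ, n < 0 → coeffL ub n = 0)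
    (hva : ∀ n : ℤ, 0 < n → coeffL (T (m - 2) * va) n = 0)
    (hvb : ∀ n : ℤ, 0 < n → coeffL (T m * (vb - κ • (T (-1) * va))) n = 0) :
    memBpair m κ (ua + va) (ub + vb) := by
  have hva' : ∀ n : ℤ, 2 - m < n → coeffL va n = 0 := by
    intro n hn
    have := hva (n + (m - 2)) (by omega)
    rwa [coeffL_T_mul, add_sub_cancel_right] at this
  have hvb' : ∀ n : ℤ, -m < n → coeffL vb n = κ * coeffL va (n + 1) := by
    intro n hn
    have := hvb (n + m) (by omega)
    rw [coeffL_T_mul, add_sub_cancel_right, coeffL_sub, coeffL_smul, coeffL_T_mul] at this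
    have hn1 : n - -1 = n + 1 := by ring
    rw [hn1] at this
    exact sub_eq_zero.mp this
  refine ⟨?_, ?_, ?_⟩
  · intro n h1 h2
    rw [coeffL_add, hua n h2, hva' n h1, add_zero]
  · intro n h1 h2
    rw [coeffL_add, coeffL_add, hub n (by omega), hvb' n h1, hua (n+1) (by omega), zero_add,
      zero_add]
  · rintro (h | ⟨h1, h2⟩)
    · rw [coeffL_add, hub (-1) (by omega), hvb' (-1) (by omega), zero_add]
      have : coeffL va (-1 + 1) = 0 := hva' 0 (by omega)
      rw [this, mul_zero]
    · rw [coeffL_add, hub (-1) (by omega), hvb' (-1) (by omega), zero_add, h2, zero_mul]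

/-- backward: pair conditions give a decomposition -/
lemma pair_decomp (m : ℤ) (κ : ℂ) (a b : L) (h : memBpair m κ a b) :
    ∃ qa qb : L,
      (∀ n : ℤ, 0 < n → coeffL (T (m - 2) * qa) n = 0) ∧
      (∀ n : ℤ, 0 < n → coeffL (T m * (qb - κ • (T (-1) * qa))) n = 0) ∧
      (∀ n : ℤ, n < 0 → coeffL (a - qa) n = 0) ∧
      (∀ n : ℤ, n < 0 → coeffL (b - qb) n = 0) := by
  obtain ⟨h1, h2, h3⟩ := h
  classical
  set c0 : ℂ := if m = 2 ∧ κ ≠ 0 then coeffL b (-1) / κ else 0 with hc0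
  refine ⟨AddMonoidAlgebra.ofCoeff (Finsupp.filter (fun n => n < 0) a.coeff) + AddMonoidAlgebra.single 0 c0,
      AddMonoidAlgebra.ofCoeff (Finsupp.filter (fun n => n < 0) b.coeff), ?_, ?_, ?_, ?_⟩
  · intro n hn
    rw [coeffL_T_mul, coeffL_add, coeffL_single]
    have hf : coeffL (AddMonoidAlgebra.ofCoeff (Finsupp.filter (fun n => n < 0) a.coeff)) (n - (m-2))
        = if n - (m-2) < 0 then coeffL a (n - (m-2)) else 0 := by
      unfold coeffL; rw [AddMonoidAlgebra.coeff_ofCoeff, Finsupp.filter_apply]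
    rw [hf]
    split_ifs with hneg h0 h0
    · omega
    · rw [h1 _ (by omega) hneg, add_zero]
    · rw [hc0]
      have hm : ¬ (m = 2) := by omega
      simp [hm]
    · rw [add_zero]
  · intro n hn
    rw [coeffL_T_mul, coeffL_sub, coeffL_smul, coeffL_T_mul]
    set j : ℤ := n - m with hj
    have hfb : coeffL (AddMonoidAlgebra.ofCoeff (Finsupp.filter (fun n => n < 0) b.coeff)) j
        = if j < 0 then coeffL b j else 0 := by
      unfold coeffL; rw [AddMonoidAlgebra.coeff_ofCoeff, Finsupp.filter_apply]
    have hfa : ∀ i : ℤ, coeffL (AddMonoidAlgebra.ofCoeff (Finsupp.filter (fun n => n < 0) a.coeff)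
        + AddMonoidAlgebra.single 0 c0) i
        = (if i < 0 then coeffL a i else 0) + (if i = 0 then c0 else 0) := by
      intro i
      rw [coeffL_add, coeffL_single]
      unfold coeffL
      rw [AddMonoidAlgebra.coeff_ofCoeff, Finsupp.filter_apply]
    rw [hfb, hfa]
    have hji : j - -1 = j + 1 := by ring
    rw [hji]
    by_cases hj0 : j < 0
    · rw [if_pos hj0]
      by_cases hj1 : j ≤ -2
      · rw [h2 j (by omega) hj1, if_pos (by omega : j + 1 < 0), if_neg (by omega)]
        ring
      · -- j = -1
        have hjm1 : j = -1 := by omega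
        rw [if_neg (by omega : ¬ (j + 1 < 0)), if_pos (by omega : j + 1 = 0), zero_add, hjm1]
        by_cases hcase : m = 2 ∧ κ ≠ 0
        · rw [hc0, if_pos hcase, mul_comm, div_mul_cancel₀ _ hcase.2, sub_self]
        · have hflag : 3 ≤ m ∨ (m = 2 ∧ κ = 0) := by
            rcases hcase with hcase
            by_cases hm2 : m = 2
            · right; constructor; exact hm2
              by_contra hknz
              exact hcase ⟨hm2, hknz⟩
            · left; omega
          rw [h3 hflag, hc0, if_neg hcase, mul_zero, sub_zero]
    · rw [if_neg hj0, if_neg (by omega : ¬ (j + 1 < 0)), if_neg (by omega : ¬ (j + 1 = 0)),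
        add_zero, mul_zero, sub_zero]
  · intro n hn
    rw [coeffL_sub]
    have hfa : coeffL (AddMonoidAlgebra.ofCoeff (Finsupp.filter (fun n => n < 0) a.coeff)
        + AddMonoidAlgebra.single 0 c0) n
        = (if n < 0 then coeffL a n else 0) + (if n = 0 then c0 else 0) := by
      rw [coeffL_add, coeffL_single]
      unfold coeffL
      rw [AddMonoidAlgebra.coeff_ofCoeff, Finsupp.filter_apply]
    rw [hfa, if_pos hn, if_neg (by omega), add_zero, sub_self]
  · intro n hn
    rw [coeffL_sub]
    have hfb : coeffL (AddMonoidAlgebra.ofCoeff (Finsupp.filter (fun n => n < 0) b.coeff)) n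
        = if n < 0 then coeffL b n else 0 := by
      unfold coeffL; rw [AddMonoidAlgebra.coeff_ofCoeff, Finsupp.filter_apply]
    rw [hfb, if_pos hn, sub_self]
lemma cndA_apply (m : ℤ) (i : Fin 6) (v : V) : cndA m i v = T m * v i := rfl

lemma cndB_apply (m : ℤ) (c : ℂ) (i j : Fin 6) (v : V) :
    cndB m c i j v = T m * (v i - c • (T (-1) * v j)) := by
  simp [cndB, LinearMap.mulLeft_apply, LinearMap.sub_apply]

lemma mem_B_iff (k1 k2 k3 : ℤ) (v : V) :
    v ∈ B k1 k2 k3 ↔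
      memBpair (k1 + k2) (k3 : ℂ) (v 0) (v 5) ∧
      memBpair (k1 + k3) (-(k2 : ℂ)) (v 1) (v 4) ∧
      memBpair (k2 + k3) (k1 : ℂ) (v 2) (v 3) := by
  constructor
  · intro h
    rcases Submodule.mem_sup.mp h with ⟨u, hu, q, hq, huq⟩
    have hu' : ∀ i : Fin 6, ∀ n : ℤ, n < 0 → coeffL (u i) n = 0 := by
      intro i
      exact (Submodule.mem_pi.mp hu) i (Set.mem_univ i)
    simp only [B1, Submodule.mem_inf, Submodule.mem_comap] at hq
    obtain ⟨⟨⟨⟨⟨hqA0, hqA1⟩, hqA2⟩, hqB1⟩, hqB2⟩, hqB3⟩ := hq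
    rw [cndA_apply, mem_Lminus_iff] at hqA0 hqA1 hqA2
    rw [cndB_apply, mem_Lminus_iff] at hqB1 hqB2 hqB3
    have hv : ∀ i : Fin 6, v i = u i + q i := by
      intro i; rw [← huq]; rfl
    refine ⟨?_, ?_, ?_⟩
    · rw [hv 0, hv 5]
      exact pair_mem _ _ _ _ _ _ (hu' 0) (hu' 5)
        (by simpa using hqA0) (by simpa using hqB3)
    · rw [hv 1, hv 4]
      exact pair_mem _ _ _ _ _ _ (hu' 1) (hu' 4)
        (by simpa using hqA1) (by simpa using hqB2)
    · rw [hv 2, hv 3]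
      exact pair_mem _ _ _ _ _ _ (hu' 2) (hu' 3)
        (by simpa using hqA2) (by simpa using hqB1)
  · rintro ⟨h3, h2, h1⟩
    obtain ⟨qa3, qb3, h3A, h3B, h3ua, h3ub⟩ := pair_decomp _ _ _ _ h3
    obtain ⟨qa2, qb2, h2A, h2B, h2ua, h2ub⟩ := pair_decomp _ _ _ _ h2
    obtain ⟨qa1, qb1, h1A, h1B, h1ua, h1ub⟩ := pair_decomp _ _ _ _ h1
    set q : V := ![qa3, qa2, qa1, qb1, qb2, qb3] with hqdef
    refine Submodule.mem_sup.mpr ⟨v - q, ?_, q, ?_, by abel⟩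
    · refine Submodule.mem_pi.mpr ?_
      intro i _
      rw [mem_Lplus_iff]
      intro n hn
      have hsub : coeffL ((v - q) i) n = coeffL (v i - q i) n := rfl
      rw [hsub, coeffL_sub]
      fin_cases i
      · have := h3ua n hn; rw [coeffL_sub] at this; simpa [hqdef] using this
      · have := h2ua n hn; rw [coeffL_sub] at this; simpa [hqdef] using this
      · have := h1ua n hn; rw [coeffL_sub] at this; simpa [hqdef] using this
      · have := h1ub n hn; rw [coeffL_sub] at this; simpa [hqdef] using this
      · have := h2ub n hn; rw [coeffL_sub] at this; simpa [hqdef] using this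
      · have := h3ub n hn; rw [coeffL_sub] at this; simpa [hqdef] using this
    · simp only [B1, Submodule.mem_inf, Submodule.mem_comap]
      refine ⟨⟨⟨⟨⟨?_, ?_⟩, ?_⟩, ?_⟩, ?_⟩, ?_⟩ <;>
        first
          | (rw [cndA_apply, mem_Lminus_iff]; intro n hn
             first
               | simpa [hqdef] using h3A n hn
               | simpa [hqdef] using h2A n hn
               | simpa [hqdef] using h1A n hn)
          | (rw [cndB_apply, mem_Lminus_iff]; intro n hn
             first
               | simpa [hqdef] using h1B n hn
               | simpa [hqdef] using h2B n hn
               | simpa [hqdef] using h3B n hn)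
lemma coeffL_Fa (m : ℤ) (a : L) (n : ℤ) :
    coeffL (((2 - m : ℤ) : ℂ) • (T 1 * a) - T 2 * D a) n
      = ((3 : ℂ) - m - n) * coeffL a (n - 1) := by
  rw [coeffL_sub, coeffL_smul, coeffL_T_mul, coeffL_T_mul, coeffL_D]
  have h : n - 2 + 1 = n - 1 := by ring
  rw [h]; push_cast; ring

lemma coeffL_Fb (m : ℤ) (κ : ℂ) (a b : L) (n : ℤ) :
    coeffL (κ • a - (m : ℂ) • (T 1 * b) - T 2 * D b) n
      = κ * coeffL a n - ((m : ℂ) + n - 1) * coeffL b (n - 1) := by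
  rw [coeffL_sub, coeffL_sub, coeffL_smul, coeffL_smul, coeffL_T_mul, coeffL_T_mul, coeffL_D]
  have h : n - 2 + 1 = n - 1 := by ring
  rw [h]; push_cast; ring

lemma cast_ne (j : ℤ) (h : j ≠ 0) : (j : ℂ) ≠ 0 := Int.cast_ne_zero.mpr h

lemma pairInv (m : ℤ) (κ : ℂ) (a b : L)
    (hne : ¬ (m = 2 ∧ κ = 0))
    (hE : memBpair m κ (D a) (D b))
    (hF : memBpair m κ (((2 - m : ℤ) : ℂ) • (T 1 * a) - T 2 * D a)
      (κ • a - (m : ℂ) • (T 1 * b) - T 2 * D b)) :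
    ∃ c : ℂ, (m ≠ 4 → c = 0) ∧
      memBpair m κ (a - c • T (-1)) (b - (c * κ / 2) • T (-2)) := by
  have E1 : ∀ n : ℤ, 2 - m < n → n < 0 → ((n : ℂ) + 1) * coeffL a (n + 1) = 0 := by
    intro n h1 h2; have := hE.1 n h1 h2; rwa [coeffL_D] at this
  have E2 : ∀ n : ℤ, -m < n → n ≤ -2 →
      ((n : ℂ) + 1) * coeffL b (n + 1) = κ * (((n : ℂ) + 1) + 1) * coeffL a (n + 1 + 1) := by
    intro n h1 h2; have := hE.2.1 n h1 h2
    rw [coeffL_D, coeffL_D] at this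
    rw [this]; push_cast; ring
  have F1 : ∀ n : ℤ, 2 - m < n → n < 0 → ((3 : ℂ) - m - n) * coeffL a (n - 1) = 0 := by
    intro n h1 h2; have := hF.1 n h1 h2; rwa [coeffL_Fa] at this
  have F2 : ∀ n : ℤ, -m < n → n ≤ -2 →
      κ * coeffL a n - ((m : ℂ) + n - 1) * coeffL b (n - 1)
        = κ * (((3 : ℂ) - m - ((n + 1 : ℤ) : ℂ)) * coeffL a n) := by
    intro n h1 h2; have := hF.2.1 n h1 h2
    rw [coeffL_Fa, coeffL_Fb] at this
    have h : n + 1 - 1 = n := by ring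
    rw [h] at this; exact this
  have F3 : (3 ≤ m ∨ (m = 2 ∧ κ = 0)) →
      κ * coeffL a (-1) - ((m : ℂ) + (-1) - 1) * coeffL b (-2) = 0 := by
    intro hf; have := hF.2.2 hf
    rw [coeffL_Fb] at this
    convert this using 3 <;> norm_num
  by_cases hm4 : m = 4
  · subst hm4
    refine ⟨coeffL a (-1), fun h => absurd rfl h, ?_, ?_, ?_⟩
    · intro n h1 h2
      have hn : n = -1 := by omega
      subst hn
      rw [coeffL_sub, coeffL_smul, coeffL_T, if_pos rfl, mul_one, sub_self]
    · intro n h1 h2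
      rcases (by omega : n = -2 ∨ n = -3) with hn | hn <;> subst hn
      · rw [show (-2 : ℤ) + 1 = -1 from by norm_num, coeffL_sub, coeffL_smul, coeffL_T,
          if_pos rfl, coeffL_sub, coeffL_smul, coeffL_T, if_pos rfl]
        have e2 := E2 (-3) (by omega) (by omega)
        norm_num at e2
        linear_combination e2 / 2
      · rw [show (-3 : ℤ) + 1 = -2 from by norm_num, coeffL_sub, coeffL_smul, coeffL_T,
          if_neg (by norm_num), mul_zero, sub_zero, coeffL_sub, coeffL_smul, coeffL_T,
          if_neg (by norm_num), mul_zero, sub_zero]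
        have f2 := F2 (-2) (by omega) (by omega)
        norm_num at f2
        linear_combination -f2
    · intro _
      rw [coeffL_sub, coeffL_smul, coeffL_T, if_neg (by norm_num), mul_zero, sub_zero]
      have e2 := E2 (-2) (by omega) (by omega)
      norm_num at e2
      exact e2
  · refine ⟨0, fun _ => rfl, ?_⟩
    have hs1 : a - (0 : ℂ) • T (-1) = a := by simp
    have hs2 : b - ((0 : ℂ) * κ / 2) • T (-2) = b := by simp
    rw [hs1, hs2]
    by_cases hm1 : m ≤ 1
    · exact ⟨fun n h1 h2 => by omega, fun n h1 h2 => by omega,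
        fun hf => by rcases hf with h | ⟨h, _⟩ <;> omega⟩
    · by_cases hm2 : m = 2
      · refine ⟨fun n h1 h2 => by omega, fun n h1 h2 => by omega, fun hf => ?_⟩
        rcases hf with h | ⟨h, hk⟩
        · omega
        · exact absurd ⟨hm2, hk⟩ hne
      · by_cases hm3 : m = 3
        · subst hm3
          refine ⟨fun n h1 h2 => by omega, ?_, ?_⟩
          · intro n h1 h2
            have hn : n = -2 := by omega
            subst hn
            rw [show (-2 : ℤ) + 1 = -1 from by norm_num]
            have f3 := F3 (Or.inl (by omega))
            norm_num at f3 ⊢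
            linear_combination -f3
          · intro _
            have e2 := E2 (-2) (by omega) (by omega)
            norm_num at e2
            exact e2
        · -- m ≥ 5
          have hm5 : 5 ≤ m := by omega
          have ham1 : coeffL a (-1) = 0 := by
            have e1 := E1 (-2) (by omega) (by omega)
            norm_num at e1
            exact e1
          have hawin : ∀ n : ℤ, 2 - m < n → n < 0 → coeffL a n = 0 := by
            intro n h1 h2
            by_cases hn1 : n = -1
            · rw [hn1]; exact ham1
            · by_cases hn2 : n = 3 - m
              · have f1 := F1 (4 - m) (by omega) (by omega)
                have hcast : ((3 : ℂ) - m - ((4 - m : ℤ) : ℂ)) = -1 := by push_cast; ring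
                rw [hcast] at f1
                have h4 : (4 - m : ℤ) - 1 = 3 - m := by ring
                rw [h4] at f1
                rw [hn2]
                linear_combination -f1
              · have e1 := E1 (n - 1) (by omega) (by omega)
                have h4 : n - 1 + 1 = n := by ring
                rw [h4] at e1
                have hnz : ((n - 1 : ℤ) : ℂ) + 1 ≠ 0 := by
                  intro hcontra
                  apply cast_ne n (by omega)
                  push_cast at hcontra ⊢
                  linear_combination hcontra
                exact (mul_eq_zero.mp e1).resolve_left hnz
          have hbm2 : coeffL b (-2) = 0 := by
            have e2 := E2 (-3) (by omega) (by omega)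
            rw [show (-3 : ℤ) + 1 + 1 = -1 from by norm_num, show (-3 : ℤ) + 1 = -2
              from by norm_num, ham1, mul_zero] at e2
            have hnz : ((-3 : ℤ) : ℂ) + 1 ≠ 0 := by norm_num
            exact (mul_eq_zero.mp e2).resolve_left (by push_cast at hnz ⊢; exact hnz)
          have hbm1 : coeffL b (-1) = 0 := by
            have e2 := E2 (-2) (by omega) (by omega)
            norm_num at e2
            exact e2
          refine ⟨hawin, ?_, fun _ => hbm1⟩
          intro n h1 h2
          by_cases hn2 : n = -2
          · subst hn2
            rw [show (-2 : ℤ) + 1 = -1 from by norm_num, hbm2, ham1, mul_zero]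
          · have f2 := F2 (n + 1) (by omega) (by omega)
            have h4 : n + 1 - 1 = n := by ring
            rw [h4] at f2
            have hnz : ((m + n : ℤ) : ℂ) ≠ 0 := cast_ne _ (by omega)
            have key : ((m + n : ℤ) : ℂ) * coeffL b n
                = ((m + n : ℤ) : ℂ) * (κ * coeffL a (n + 1)) := by
              push_cast
              push_cast at f2
              linear_combination -f2
            exact mul_left_cancel₀ hnz key
lemma memBpair_neg (m : ℤ) (κ : ℂ) (a b : L) (h : memBpair m κ a b) :
    memBpair m κ (-a) (-b) := by
  obtain ⟨h1, h2, h3⟩ := h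
  refine ⟨fun n p q => by rw [coeffL_neg, h1 n p q, neg_zero],
    fun n p q => by rw [coeffL_neg, coeffL_neg, h2 n p q]; ring,
    fun hf => by rw [coeffL_neg, h3 hf, neg_zero]⟩

lemma D_C (c : ℂ) : D (C c) = 0 := by
  rw [C_eq_single]
  unfold D
  rw [AddMonoidAlgebra.coeff_single]
  erw [Finsupp.sum_single_index] <;> simp

lemma coeffL_C (c : ℂ) (n : ℤ) : coeffL (C c) n = if n = 0 then c else 0 := by
  rw [C_eq_single, coeffL_single]

lemma degOK_C (d : ℤ) (hd : 0 ≤ d) (c : ℂ) : degOK d (C c) := by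
  intro n hn
  rw [coeffL_C]
  rcases hn with h | h <;> rw [if_neg (by omega)]

lemma degOK_zero (d : ℤ) : degOK d 0 := fun n _ => coeffL_zero n

/-- Build a `GElt` from a constant complex matrix together with its inverse. -/
def constGElt (k : Fin 3 → ℤ) (M N : Matrix (Fin 3) (Fin 3) ℂ)
    (h1 : M * N = 1) (h2 : N * M = 1)
    (hM : ∀ p q, k q - k p < 0 → M p q = 0)
    (hN : ∀ p q, k q - k p < 0 → N p q = 0) : GElt k where
  A := M.map C
  Ainv := N.map C
  mul_inv := by
    rw [← Matrix.map_mul, h1, Matrix.map_one _ (map_zero C) (map_one C)]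
  inv_mul := by
    rw [← Matrix.map_mul, h2, Matrix.map_one _ (map_zero C) (map_one C)]
  degA := by
    intro p q
    rcases lt_or_ge (k q - k p) 0 with h | h
    · rw [Matrix.map_apply, hM p q h, map_zero]; exact degOK_zero _
    · exact degOK_C _ h _
  degAinv := by
    intro p q
    rcases lt_or_ge (k q - k p) 0 with h | h
    · rw [Matrix.map_apply, hN p q h, map_zero]; exact degOK_zero _
    · exact degOK_C _ h _

lemma IntAct_const (k : Fin 3 → ℤ) (M N : Matrix (Fin 3) (Fin 3) ℂ)
    (h1 : M * N = 1) (h2 : N * M = 1)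
    (hM : ∀ p q, k q - k p < 0 → M p q = 0)
    (hN : ∀ p q, k q - k p < 0 → N p q = 0) (k3 : ℤ) :
    IntAct (constGElt k M N h1 h2 hM hN) ![T (-1), 0, 0, 0, 0, ((k3 : ℂ) / 2) • T (-2)] =
      ![(M 0 0 * M 1 1 - M 1 0 * M 0 1) • T (-1),
        (M 0 0 * M 2 1 - M 2 0 * M 0 1) • T (-1),
        (M 1 0 * M 2 1 - M 2 0 * M 1 1) • T (-1),
        (M.det * N 2 0 * ((k3 : ℂ) / 2)) • T (-2),
        (M.det * N 2 1 * ((k3 : ℂ) / 2)) • T (-2),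
        (M.det * N 2 2 * ((k3 : ℂ) / 2)) • T (-2)] := by
  have hdet : (M.map C).det = C M.det := (RingHom.map_det C M).symm
  funext i
  fin_cases i <;>
    (simp [IntAct, constGElt, Matrix.map_apply, hdet, D_C, smul_eq_C_mul, map_mul, map_sub,
      show (5 : Fin 6) = Fin.succ 4 from rfl, Matrix.cons_val_succ]; try ring)
lemma D_zero : D (0 : L) = 0 := by
  unfold D
  rw [AddMonoidAlgebra.coeff_zero]
  exact Finsupp.sum_zero_index

lemma memBpair_zero (m : ℤ) (κ : ℂ) : memBpair m κ 0 0 :=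
  ⟨fun n _ _ => coeffL_zero n,
   fun n _ _ => by rw [coeffL_zero, coeffL_zero, mul_zero],
   fun _ => coeffL_zero _⟩

lemma pair_shift_mem (m : ℤ) (κ : ℂ) (c : ℂ) (P Q za zb : L)
    (hP : P = c • T (-1)) (hQ : Q = (c * κ / 2) • T (-2))
    (h : memBpair m κ (za - c • T (-1)) (zb - (c * κ / 2) • T (-2))) :
    memBpair m κ (P - za) (Q - zb) := by
  subst hP hQ
  have h2 := memBpair_neg _ _ _ _ h
  rwa [neg_sub, neg_sub] at h2

lemma final_assemble (k1 k2 k3 : ℤ) (z w' : V) (c1 c2 c3 : ℂ)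
    (hIA : w' = ![c3 • T (-1), c2 • T (-1), c1 • T (-1),
      (c1 * (k1 : ℂ) / 2) • T (-2), (c2 * (-(k2 : ℂ)) / 2) • T (-2),
      (c3 * (k3 : ℂ) / 2) • T (-2)])
    (hp3 : memBpair (k1 + k2) (k3 : ℂ) (z 0 - c3 • T (-1)) (z 5 - (c3 * (k3 : ℂ) / 2) • T (-2)))
    (hp2 : memBpair (k1 + k3) (-(k2 : ℂ)) (z 1 - c2 • T (-1))
      (z 4 - (c2 * (-(k2 : ℂ)) / 2) • T (-2)))
    (hp1 : memBpair (k2 + k3) (k1 : ℂ) (z 2 - c1 • T (-1))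
      (z 3 - (c1 * (k1 : ℂ) / 2) • T (-2))) :
    w' - z ∈ B k1 k2 k3 := by
  rw [mem_B_iff]
  subst hIA
  refine ⟨?_, ?_, ?_⟩
  · exact pair_shift_mem _ _ c3 _ _ _ _ rfl rfl hp3
  · exact pair_shift_mem _ _ c2 _ _ _ _ rfl rfl hp2
  · exact pair_shift_mem _ _ c1 _ _ _ _ rfl rfl hp1

lemma vec6_ext (a0 a1 a2 a3 a4 a5 b0 b1 b2 b3 b4 b5 : L)
    (h0 : a0 = b0) (h1 : a1 = b1) (h2 : a2 = b2) (h3 : a3 = b3) (h4 : a4 = b4) (h5 : a5 = b5) :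
    (![a0, a1, a2, a3, a4, a5] : V) = ![b0, b1, b2, b3, b4, b5] := by
  subst h0 h1 h2 h3 h4 h5; rfl

lemma build_case (k1 k2 k3 : ℤ) (z : V) (c1 c2 c3 : ℂ)
    (M N : Matrix (Fin 3) (Fin 3) ℂ) (pf1 : M * N = 1) (pf2 : N * M = 1)
    (pfM : ∀ p q : Fin 3, (![k1, k2, k3]) q - (![k1, k2, k3]) p < 0 → M p q = 0)
    (pfN : ∀ p q : Fin 3, (![k1, k2, k3]) q - (![k1, k2, k3]) p < 0 → N p q = 0)
    (h0 : M 0 0 * M 1 1 - M 1 0 * M 0 1 = c3)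
    (h1 : M 0 0 * M 2 1 - M 2 0 * M 0 1 = c2)
    (h2 : M 1 0 * M 2 1 - M 2 0 * M 1 1 = c1)
    (h3 : M.det * N 2 0 * ((k3 : ℂ) / 2) = c1 * (k1 : ℂ) / 2)
    (h4 : M.det * N 2 1 * ((k3 : ℂ) / 2) = c2 * (-(k2 : ℂ)) / 2)
    (h5 : M.det * N 2 2 * ((k3 : ℂ) / 2) = c3 * (k3 : ℂ) / 2)
    (hp3 : memBpair (k1 + k2) (k3 : ℂ) (z 0 - c3 • T (-1)) (z 5 - (c3 * (k3 : ℂ) / 2) • T (-2)))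
    (hp2 : memBpair (k1 + k3) (-(k2 : ℂ)) (z 1 - c2 • T (-1))
      (z 4 - (c2 * (-(k2 : ℂ)) / 2) • T (-2)))
    (hp1 : memBpair (k2 + k3) (k1 : ℂ) (z 2 - c1 • T (-1))
      (z 3 - (c1 * (k1 : ℂ) / 2) • T (-2))) :
    ∃ g : GElt ![k1, k2, k3],
      IntAct g ![T (-1), 0, 0, 0, 0, ((k3 : ℂ) / 2) • T (-2)] - z ∈ B k1 k2 k3 := by
  refine ⟨constGElt ![k1, k2, k3] M N pf1 pf2 pfM pfN,
    final_assemble k1 k2 k3 z _ c1 c2 c3 ?_ hp3 hp2 hp1⟩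
  rw [IntAct_const]
  exact vec6_ext _ _ _ _ _ _ _ _ _ _ _ _ (by rw [h0]) (by rw [h1]) (by rw [h2])
    (by rw [h3]) (by rw [h4]) (by rw [h5])

lemma caseA (k1 k2 k3 : ℤ) (z : V) (c1 c2 c3 : ℂ) (hk2 : k2 = 4 - k1)
    (h1z : c1 = 0) (h2z : c2 = 0) (h3nz : c3 ≠ 0)
    (hp3 : memBpair (k1 + k2) (k3 : ℂ) (z 0 - c3 • T (-1)) (z 5 - (c3 * (k3 : ℂ) / 2) • T (-2)))
    (hp2 : memBpair (k1 + k3) (-(k2 : ℂ)) (z 1 - c2 • T (-1))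
      (z 4 - (c2 * (-(k2 : ℂ)) / 2) • T (-2)))
    (hp1 : memBpair (k2 + k3) (k1 : ℂ) (z 2 - c1 • T (-1))
      (z 3 - (c1 * (k1 : ℂ) / 2) • T (-2))) :
    ∃ g : GElt ![k1, k2, k3],
      IntAct g ![T (-1), 0, 0, 0, 0, ((k3 : ℂ) / 2) • T (-2)] - z ∈ B k1 k2 k3 := by
  apply build_case k1 k2 k3 z c1 c2 c3 (!![c3, 0, 0; 0, 1, 0; 0, 0, 1]) (!![c3⁻¹, 0, 0; 0, 1, 0; 0, 0, 1]) ?_ ?_ ?_ ?_ ?_ ?_ ?_ ?_ ?_ ?_ hp3 hp2 hp1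
  · rw [Matrix.mul_fin_three, Matrix.one_fin_three]
    congr 1 <;> field_simp [h3nz] <;> simp [h3nz]
  · rw [Matrix.mul_fin_three, Matrix.one_fin_three]
    congr 1 <;> field_simp [h3nz] <;> simp [h3nz]
  · intro p q hlt
    fin_cases p <;> fin_cases q <;>
      first
        | rfl
        | (exfalso; simp at hlt; try omega)
  · intro p q hlt
    fin_cases p <;> fin_cases q <;>
      first
        | rfl
        | (exfalso; simp at hlt; try omega)
  all_goals
    simp [Matrix.det_fin_three, Matrix.vecHead, Matrix.vecTail, h1z, h2z]
  all_goals field_simp [h3nz]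
  all_goals ring

lemma caseB (k1 k2 k3 : ℤ) (z : V) (c1 c2 c3 : ℂ) (hk2 : k2 = 4 - k1)
    (h2z : c2 = 0) (h1z : c1 ≠ 0) (h3z : c3 = 0) (e31 : k3 = k1)
    (hp3 : memBpair (k1 + k2) (k3 : ℂ) (z 0 - c3 • T (-1)) (z 5 - (c3 * (k3 : ℂ) / 2) • T (-2)))
    (hp2 : memBpair (k1 + k3) (-(k2 : ℂ)) (z 1 - c2 • T (-1))
      (z 4 - (c2 * (-(k2 : ℂ)) / 2) • T (-2)))
    (hp1 : memBpair (k2 + k3) (k1 : ℂ) (z 2 - c1 • T (-1))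
      (z 3 - (c1 * (k1 : ℂ) / 2) • T (-2))) :
    ∃ g : GElt ![k1, k2, k3],
      IntAct g ![T (-1), 0, 0, 0, 0, ((k3 : ℂ) / 2) • T (-2)] - z ∈ B k1 k2 k3 := by
  apply build_case k1 k2 k3 z c1 c2 c3 (!![0, 0, 1; 0, 1, 0; -c1, 0, 0]) (!![0, 0, -c1⁻¹; 0, 1, 0; 1, 0, 0]) ?_ ?_ ?_ ?_ ?_ ?_ ?_ ?_ ?_ ?_ hp3 hp2 hp1
  · rw [Matrix.mul_fin_three, Matrix.one_fin_three]
    congr 1 <;> field_simp [h1z] <;> simp [h1z]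
  · rw [Matrix.mul_fin_three, Matrix.one_fin_three]
    congr 1 <;> field_simp [h1z] <;> simp [h1z]
  · intro p q hlt
    fin_cases p <;> fin_cases q <;>
      first
        | rfl
        | (exfalso; simp at hlt; try omega)
  · intro p q hlt
    fin_cases p <;> fin_cases q <;>
      first
        | rfl
        | (exfalso; simp at hlt; try omega)
  all_goals
    simp [Matrix.det_fin_three, Matrix.vecHead, Matrix.vecTail, h2z, h3z, e31]
  all_goals field_simp [h1z]
  all_goals ring

lemma caseC (k1 k2 k3 : ℤ) (z : V) (c1 c2 c3 : ℂ) (hk2 : k2 = 4 - k1)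
    (h2z : c2 = 0) (h1z : c1 ≠ 0) (h3z : c3 ≠ 0) (e31 : k3 = k1)
    (hp3 : memBpair (k1 + k2) (k3 : ℂ) (z 0 - c3 • T (-1)) (z 5 - (c3 * (k3 : ℂ) / 2) • T (-2)))
    (hp2 : memBpair (k1 + k3) (-(k2 : ℂ)) (z 1 - c2 • T (-1))
      (z 4 - (c2 * (-(k2 : ℂ)) / 2) • T (-2)))
    (hp1 : memBpair (k2 + k3) (k1 : ℂ) (z 2 - c1 • T (-1))
      (z 3 - (c1 * (k1 : ℂ) / 2) • T (-2))) :
    ∃ g : GElt ![k1, k2, k3],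
      IntAct g ![T (-1), 0, 0, 0, 0, ((k3 : ℂ) / 2) • T (-2)] - z ∈ B k1 k2 k3 := by
  apply build_case k1 k2 k3 z c1 c2 c3 (!![c3, 0, 0; 0, 1, 0; -c1, 0, 1]) (!![c3⁻¹, 0, 0; 0, 1, 0; c1 * c3⁻¹, 0, 1]) ?_ ?_ ?_ ?_ ?_ ?_ ?_ ?_ ?_ ?_ hp3 hp2 hp1
  · rw [Matrix.mul_fin_three, Matrix.one_fin_three]
    congr 1 <;> field_simp [h3z] <;> simp [h3z]
  · rw [Matrix.mul_fin_three, Matrix.one_fin_three]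
    congr 1 <;> field_simp [h3z] <;> simp [h3z]
  · intro p q hlt
    fin_cases p <;> fin_cases q <;>
      first
        | rfl
        | (exfalso; simp at hlt; try omega)
  · intro p q hlt
    fin_cases p <;> fin_cases q <;>
      first
        | rfl
        | (exfalso; simp at hlt; try omega)
  all_goals
    simp [Matrix.det_fin_three, Matrix.vecHead, Matrix.vecTail, h2z, e31]
  all_goals field_simp [h3z]
  all_goals ring

lemma caseD (k1 k2 k3 : ℤ) (z : V) (c1 c2 c3 : ℂ) (hk2 : k2 = 4 - k1)
    (h2z : c2 ≠ 0) (h1z : c1 = 0) (h3z : c3 = 0) (e32 : k3 = k2)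
    (hp3 : memBpair (k1 + k2) (k3 : ℂ) (z 0 - c3 • T (-1)) (z 5 - (c3 * (k3 : ℂ) / 2) • T (-2)))
    (hp2 : memBpair (k1 + k3) (-(k2 : ℂ)) (z 1 - c2 • T (-1))
      (z 4 - (c2 * (-(k2 : ℂ)) / 2) • T (-2)))
    (hp1 : memBpair (k2 + k3) (k1 : ℂ) (z 2 - c1 • T (-1))
      (z 3 - (c1 * (k1 : ℂ) / 2) • T (-2))) :
    ∃ g : GElt ![k1, k2, k3],
      IntAct g ![T (-1), 0, 0, 0, 0, ((k3 : ℂ) / 2) • T (-2)] - z ∈ B k1 k2 k3 := by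
  apply build_case k1 k2 k3 z c1 c2 c3 (!![1, 0, 0; 0, 0, 1; 0, c2, 0]) (!![1, 0, 0; 0, 0, c2⁻¹; 0, 1, 0]) ?_ ?_ ?_ ?_ ?_ ?_ ?_ ?_ ?_ ?_ hp3 hp2 hp1
  · rw [Matrix.mul_fin_three, Matrix.one_fin_three]
    congr 1 <;> field_simp [h2z] <;> simp [h2z]
  · rw [Matrix.mul_fin_three, Matrix.one_fin_three]
    congr 1 <;> field_simp [h2z] <;> simp [h2z]
  · intro p q hlt
    fin_cases p <;> fin_cases q <;>
      first
        | rfl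
        | (exfalso; simp at hlt; try omega)
  · intro p q hlt
    fin_cases p <;> fin_cases q <;>
      first
        | rfl
        | (exfalso; simp at hlt; try omega)
  all_goals
    simp [Matrix.det_fin_three, Matrix.vecHead, Matrix.vecTail, h1z, h3z, e32]
  all_goals field_simp [h2z]
  all_goals ring

lemma caseE (k1 k2 k3 : ℤ) (z : V) (c1 c2 c3 : ℂ) (hk2 : k2 = 4 - k1)
    (h2z : c2 ≠ 0) (h1z : c1 = 0) (h3z : c3 ≠ 0) (e32 : k3 = k2)
    (hp3 : memBpair (k1 + k2) (k3 : ℂ) (z 0 - c3 • T (-1)) (z 5 - (c3 * (k3 : ℂ) / 2) • T (-2)))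
    (hp2 : memBpair (k1 + k3) (-(k2 : ℂ)) (z 1 - c2 • T (-1))
      (z 4 - (c2 * (-(k2 : ℂ)) / 2) • T (-2)))
    (hp1 : memBpair (k2 + k3) (k1 : ℂ) (z 2 - c1 • T (-1))
      (z 3 - (c1 * (k1 : ℂ) / 2) • T (-2))) :
    ∃ g : GElt ![k1, k2, k3],
      IntAct g ![T (-1), 0, 0, 0, 0, ((k3 : ℂ) / 2) • T (-2)] - z ∈ B k1 k2 k3 := by
  apply build_case k1 k2 k3 z c1 c2 c3 (!![1, 0, 0; 0, c3, 0; 0, c2, 1]) (!![1, 0, 0; 0, c3⁻¹, 0; 0, -c2 * c3⁻¹, 1]) ?_ ?_ ?_ ?_ ?_ ?_ ?_ ?_ ?_ ?_ hp3 hp2 hp1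
  · rw [Matrix.mul_fin_three, Matrix.one_fin_three]
    congr 1 <;> field_simp [h3z] <;> simp [h3z]
  · rw [Matrix.mul_fin_three, Matrix.one_fin_three]
    congr 1 <;> field_simp [h3z] <;> simp [h3z]
  · intro p q hlt
    fin_cases p <;> fin_cases q <;>
      first
        | rfl
        | (exfalso; simp at hlt; try omega)
  · intro p q hlt
    fin_cases p <;> fin_cases q <;>
      first
        | rfl
        | (exfalso; simp at hlt; try omega)
  all_goals
    simp [Matrix.det_fin_three, Matrix.vecHead, Matrix.vecTail, h1z, e32]
  all_goals field_simp [h3z]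
  all_goals ring

lemma caseF (k1 k2 k3 : ℤ) (z : V) (c1 c2 c3 : ℂ) (hk2 : k2 = 4 - k1)
    (h2z : c2 ≠ 0) (h1z : c1 ≠ 0) (h3z : c3 = 0) (f1 : k1 = 2) (f2 : k2 = 2) (f3 : k3 = 2)
    (hp3 : memBpair (k1 + k2) (k3 : ℂ) (z 0 - c3 • T (-1)) (z 5 - (c3 * (k3 : ℂ) / 2) • T (-2)))
    (hp2 : memBpair (k1 + k3) (-(k2 : ℂ)) (z 1 - c2 • T (-1))
      (z 4 - (c2 * (-(k2 : ℂ)) / 2) • T (-2)))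
    (hp1 : memBpair (k2 + k3) (k1 : ℂ) (z 2 - c1 • T (-1))
      (z 3 - (c1 * (k1 : ℂ) / 2) • T (-2))) :
    ∃ g : GElt ![k1, k2, k3],
      IntAct g ![T (-1), 0, 0, 0, 0, ((k3 : ℂ) / 2) • T (-2)] - z ∈ B k1 k2 k3 := by
  apply build_case k1 k2 k3 z c1 c2 c3 (!![0, -c2, 0; 0, -c1, 1; 1, 0, 0]) (!![0, 0, 1; -c2⁻¹, 0, 0; -c1 * c2⁻¹, 1, 0]) ?_ ?_ ?_ ?_ ?_ ?_ ?_ ?_ ?_ ?_ hp3 hp2 hp1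
  · rw [Matrix.mul_fin_three, Matrix.one_fin_three]
    congr 1 <;> field_simp [h2z] <;> simp [h2z]
  · rw [Matrix.mul_fin_three, Matrix.one_fin_three]
    congr 1 <;> field_simp [h2z] <;> simp [h2z]
  · intro p q hlt
    fin_cases p <;> fin_cases q <;>
      first
        | rfl
        | (exfalso; simp at hlt; try omega)
  · intro p q hlt
    fin_cases p <;> fin_cases q <;>
      first
        | rfl
        | (exfalso; simp at hlt; try omega)
  all_goals
    simp [Matrix.det_fin_three, Matrix.vecHead, Matrix.vecTail, h3z, f1, f2, f3]
  all_goals field_simp [h2z]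
  all_goals ring

lemma caseG (k1 k2 k3 : ℤ) (z : V) (c1 c2 c3 : ℂ) (hk2 : k2 = 4 - k1)
    (h2z : c2 ≠ 0) (h1z : c1 ≠ 0) (h3z : c3 ≠ 0) (f1 : k1 = 2) (f2 : k2 = 2) (f3 : k3 = 2)
    (hp3 : memBpair (k1 + k2) (k3 : ℂ) (z 0 - c3 • T (-1)) (z 5 - (c3 * (k3 : ℂ) / 2) • T (-2)))
    (hp2 : memBpair (k1 + k3) (-(k2 : ℂ)) (z 1 - c2 • T (-1))
      (z 4 - (c2 * (-(k2 : ℂ)) / 2) • T (-2)))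
    (hp1 : memBpair (k2 + k3) (k1 : ℂ) (z 2 - c1 • T (-1))
      (z 3 - (c1 * (k1 : ℂ) / 2) • T (-2))) :
    ∃ g : GElt ![k1, k2, k3],
      IntAct g ![T (-1), 0, 0, 0, 0, ((k3 : ℂ) / 2) • T (-2)] - z ∈ B k1 k2 k3 := by
  apply build_case k1 k2 k3 z c1 c2 c3 (!![1, 0, 0; 0, c3, 0; -c1 * c3⁻¹, c2, 1]) (!![1, 0, 0; 0, c3⁻¹, 0; c1 * c3⁻¹, -c2 * c3⁻¹, 1]) ?_ ?_ ?_ ?_ ?_ ?_ ?_ ?_ ?_ ?_ hp3 hp2 hp1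
  · rw [Matrix.mul_fin_three, Matrix.one_fin_three]
    congr 1 <;> field_simp [h3z] <;> simp [h3z]
  · rw [Matrix.mul_fin_three, Matrix.one_fin_three]
    congr 1 <;> field_simp [h3z] <;> simp [h3z]
  · intro p q hlt
    fin_cases p <;> fin_cases q <;>
      first
        | rfl
        | (exfalso; simp at hlt; try omega)
  · intro p q hlt
    fin_cases p <;> fin_cases q <;>
      first
        | rfl
        | (exfalso; simp at hlt; try omega)
  all_goals
    simp [Matrix.det_fin_three, Matrix.vecHead, Matrix.vecTail, f1, f2, f3]
  all_goals field_simp [h3z]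
  all_goals ring
/-- If `k₂ = 4 − k₁` and the multiset `{k₁, k₂, k₃}` is not `{−2, 0, 4}`, there
is a unique up to isomorphism 𝔰-even-homogeneous non-split supermanifold with
retract `(k₁, 4−k₁, k₃)`, corresponding to the class of
`w = (x⁻¹, 0, 0, 0, 0, (k₃/2)x⁻²)`. -/
theorem stmt_13 (k1 k2 k3 : ℤ) (hk2 : k2 = 4 - k1)
    (hmul : ({k1, k2, k3} : Multiset ℤ) ≠ ({-2, 0, 4} : Multiset ℤ))
    (w : V) (hw : w = ![T (-1), 0, 0, 0, 0, ((k3 : ℂ) / 2) • T (-2)]) :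
    Eop w ∈ B k1 k2 k3 ∧ Fop k1 k2 k3 w ∈ B k1 k2 k3 ∧ w ∉ B k1 k2 k3 ∧
    ∀ z : V, Eop z ∈ B k1 k2 k3 → Fop k1 k2 k3 z ∈ B k1 k2 k3 → z ∉ B k1 k2 k3 →
      ∃ g : GElt ![k1, k2, k3], IntAct g w - z ∈ B k1 k2 k3 := by
  subst hw
  have hm34 : k1 + k2 = 4 := by omega
  refine ⟨?_, ?_, ?_, ?_⟩
  · -- Eop w ∈ B
    rw [mem_B_iff]
    refine ⟨⟨?_, ?_, ?_⟩, ?_, ?_⟩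
    · intro n p q
      have hn : n = -1 := by omega
      subst hn
      show coeffL (D (T (-1))) (-1) = 0
      rw [coeffL_D]
      norm_num
    · intro n p q
      show coeffL (D (((k3 : ℂ) / 2) • T (-2))) n = (k3 : ℂ) * coeffL (D (T (-1))) (n + 1)
      rw [coeffL_D, coeffL_D, coeffL_smul, coeffL_T, coeffL_T]
      rcases (by omega : n = -2 ∨ n = -3) with hn | hn <;> subst hn <;> norm_num <;> ring
    · intro _
      show coeffL (D (((k3 : ℂ) / 2) • T (-2))) (-1) = 0
      rw [coeffL_D, coeffL_smul, coeffL_T]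
      norm_num
    · exact memBpair_zero _ _
    · exact memBpair_zero _ _
  · -- Fop w ∈ B
    rw [mem_B_iff]
    refine ⟨⟨?_, ?_, ?_⟩, ?_, ?_⟩
    · intro n p q
      have hn : n = -1 := by omega
      subst hn
      show coeffL (((2 - k1 - k2 : ℤ) : ℂ) • (T 1 * T (-1)) - T 2 * D (T (-1))) (-1) = 0
      rw [coeffL_sub, coeffL_smul, coeffL_T_mul, coeffL_T_mul, coeffL_D, coeffL_T, coeffL_T]
      norm_num
    · intro n p q
      show coeffL ((k3 : ℂ) • T (-1) - ((k1 + k2 : ℤ) : ℂ) • (T 1 * (((k3 : ℂ) / 2) • T (-2)))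
          - T 2 * D (((k3 : ℂ) / 2) • T (-2))) n
        = (k3 : ℂ) * coeffL (((2 - k1 - k2 : ℤ) : ℂ) • (T 1 * T (-1)) - T 2 * D (T (-1))) (n + 1)
      rw [coeffL_sub, coeffL_sub, coeffL_smul, coeffL_smul, coeffL_T_mul, coeffL_T_mul,
        coeffL_D, coeffL_smul, coeffL_T, coeffL_smul, coeffL_T, coeffL_sub, coeffL_smul,
        coeffL_T_mul, coeffL_T_mul, coeffL_D, coeffL_T, coeffL_T]
      rcases (by omega : n = -2 ∨ n = -3) with hn | hn <;> subst hn <;>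
        norm_num [coeffL_T] <;> ring
    · intro _
      show coeffL ((k3 : ℂ) • T (-1) - ((k1 + k2 : ℤ) : ℂ) • (T 1 * (((k3 : ℂ) / 2) • T (-2)))
          - T 2 * D (((k3 : ℂ) / 2) • T (-2))) (-1) = 0
      rw [coeffL_sub, coeffL_sub, coeffL_smul, coeffL_smul, coeffL_T_mul, coeffL_T_mul,
        coeffL_D, coeffL_smul, coeffL_T, coeffL_smul, coeffL_T, coeffL_T]
      rw [hm34]
      norm_num
      ring
    · show memBpair _ _ (((2 - k1 - k3 : ℤ) : ℂ) • (T 1 * 0) - T 2 * D 0)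
        (-((k2 : ℂ) • 0) - ((k1 + k3 : ℤ) : ℂ) • (T 1 * 0) - T 2 * D 0)
      rw [D_zero]
      simp only [mul_zero, smul_zero, sub_zero, zero_sub, neg_zero, sub_self]
      exact memBpair_zero _ _
    · show memBpair _ _ (((2 - k2 - k3 : ℤ) : ℂ) • (T 1 * 0) - T 2 * D 0)
        ((k1 : ℂ) • 0 - ((k2 + k3 : ℤ) : ℂ) • (T 1 * 0) - T 2 * D 0)
      rw [D_zero]
      simp only [mul_zero, smul_zero, sub_zero, zero_sub, neg_zero, sub_self]
      exact memBpair_zero _ _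
  · -- w ∉ B
    intro h
    rw [mem_B_iff] at h
    have := h.1.1 (-1) (by omega) (by omega)
    rw [show (![T (-1), 0, 0, 0, 0, ((k3 : ℂ) / 2) • T (-2)] : V) 0 = T (-1) from rfl,
      coeffL_T] at this
    norm_num at this
  · -- uniqueness part
    intro z hEz hFz hzB
    rw [mem_B_iff] at hEz hFz
    have hne3 : ¬ (k1 + k2 = 2 ∧ (k3 : ℂ) = 0) := by rintro ⟨h, _⟩; omega
    have hne2 : ¬ (k1 + k3 = 2 ∧ -(k2 : ℂ) = 0) := by
      rintro ⟨h, hk⟩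
      have hk2z : k2 = 0 := by exact_mod_cast neg_eq_zero.mp hk
      have e1 : k1 = 4 := by omega
      have e3 : k3 = -2 := by omega
      apply hmul
      rw [e1, hk2z, e3]
      decide
    have hne1 : ¬ (k2 + k3 = 2 ∧ (k1 : ℂ) = 0) := by
      rintro ⟨h, hk⟩
      have hk1z : k1 = 0 := by exact_mod_cast hk
      have e2 : k2 = 4 := by omega
      have e3 : k3 = -2 := by omega
      apply hmul
      rw [hk1z, e2, e3]
      decide
    have hF3 : memBpair (k1 + k2) (k3 : ℂ)
        (((2 - (k1 + k2) : ℤ) : ℂ) • (T 1 * z 0) - T 2 * D (z 0))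
        ((k3 : ℂ) • z 0 - ((k1 + k2 : ℤ) : ℂ) • (T 1 * z 5) - T 2 * D (z 5)) := by
      rw [show (2 - (k1 + k2) : ℤ) = 2 - k1 - k2 from by ring]
      exact hFz.1
    have hF2 : memBpair (k1 + k3) (-(k2 : ℂ))
        (((2 - (k1 + k3) : ℤ) : ℂ) • (T 1 * z 1) - T 2 * D (z 1))
        ((-(k2 : ℂ)) • z 1 - ((k1 + k3 : ℤ) : ℂ) • (T 1 * z 4) - T 2 * D (z 4)) := by
      rw [show (2 - (k1 + k3) : ℤ) = 2 - k1 - k3 from by ring, neg_smul]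
      exact hFz.2.1
    have hF1 : memBpair (k2 + k3) (k1 : ℂ)
        (((2 - (k2 + k3) : ℤ) : ℂ) • (T 1 * z 2) - T 2 * D (z 2))
        ((k1 : ℂ) • z 2 - ((k2 + k3 : ℤ) : ℂ) • (T 1 * z 3) - T 2 * D (z 3)) := by
      rw [show (2 - (k2 + k3) : ℤ) = 2 - k2 - k3 from by ring]
      exact hFz.2.2
    obtain ⟨c3, hc3m, hp3⟩ := pairInv (k1 + k2) (k3 : ℂ) (z 0) (z 5) hne3 hEz.1 hF3
    obtain ⟨c2, hc2m, hp2⟩ := pairInv (k1 + k3) (-(k2 : ℂ)) (z 1) (z 4) hne2 hEz.2.1 hF2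
    obtain ⟨c1, hc1m, hp1⟩ := pairInv (k2 + k3) (k1 : ℂ) (z 2) (z 3) hne1 hEz.2.2 hF1
    have hnz : ¬ (c1 = 0 ∧ c2 = 0 ∧ c3 = 0) := by
      rintro ⟨e1, e2, e3⟩
      apply hzB
      rw [mem_B_iff]
      refine ⟨?_, ?_, ?_⟩
      · have := hp3; rw [e3] at this; simpa using this
      · have := hp2; rw [e2] at this; simpa using this
      · have := hp1; rw [e1] at this; simpa using this
    have hk3eq2 : c2 ≠ 0 → k3 = k2 := by
      intro h
      by_contra hne
      exact h (hc2m (by omega))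
    have hk3eq1 : c1 ≠ 0 → k3 = k1 := by
      intro h
      by_contra hne
      exact h (hc1m (by omega))
    by_cases h2z : c2 = 0
    · by_cases h1z : c1 = 0
      · have h3nz : c3 ≠ 0 := fun h => hnz ⟨h1z, h2z, h⟩
        exact caseA k1 k2 k3 z c1 c2 c3 hk2 h1z h2z h3nz hp3 hp2 hp1
      · have e31 : k3 = k1 := hk3eq1 h1z
        by_cases h3z : c3 = 0
        · exact caseB k1 k2 k3 z c1 c2 c3 hk2 h2z h1z h3z e31 hp3 hp2 hp1
        · exact caseC k1 k2 k3 z c1 c2 c3 hk2 h2z h1z h3z e31 hp3 hp2 hp1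
    · have e32 : k3 = k2 := hk3eq2 h2z
      by_cases h1z : c1 = 0
      · by_cases h3z : c3 = 0
        · exact caseD k1 k2 k3 z c1 c2 c3 hk2 h2z h1z h3z e32 hp3 hp2 hp1
        · exact caseE k1 k2 k3 z c1 c2 c3 hk2 h2z h1z h3z e32 hp3 hp2 hp1
      · have e31 : k3 = k1 := hk3eq1 h1z
        have f1 : k1 = 2 := by omega
        have f2 : k2 = 2 := by omega
        have f3 : k3 = 2 := by omega
        by_cases h3z : c3 = 0
        · exact caseF k1 k2 k3 z c1 c2 c3 hk2 h2z h1z h3z f1 f2 f3 hp3 hp2 hp1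
        · exact caseG k1 k2 k3 z c1 c2 c3 hk2 h2z h1z h3z f1 f2 f3 hp3 hp2 hp1
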